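/- For the Dirichlet copula sample ũ_i = 1 − (1−d_i)^{n−1} with d ~ Dir(1_n), the transformed Bernoulli variables b̃_i = 1{ũ_i < p} have common pairwise correlation ρ = (max(0, 2(1−p)^{1/(n−1)} − 1)^{n−1} − (1−p)²)/(p(1−p)). -/

import Mathlib

open MeasureTheory Pointwise
open scoped ENNReal

lemma measSimplex (m : ℕ) (t : ℝ) :
    MeasurableSet {x : Fin m → ℝ | (∀ k, 0 ≤ x k) ∧ ∑ k, x k ≤ t} := by
  have h1 : MeasurableSet {x : Fin m → ℝ | ∀ k, 0 ≤ x k} := by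
    rw [Set.setOf_forall]
    exact MeasurableSet.iInter fun k => measurableSet_le measurable_const (measurable_pi_apply k)
  have h2 : MeasurableSet {x : Fin m → ℝ | ∑ k, x k ≤ t} :=
    measurableSet_le (Finset.measurable_sum _ fun k _ => measurable_pi_apply k) measurable_const
  exact h1.inter h2

lemma vol_smul (m : ℕ) (hm : 1 ≤ m) (t : ℝ) :
    volume {x : Fin m → ℝ | (∀ k, 0 ≤ x k) ∧ ∑ k, x k ≤ t}
      = ENNReal.ofReal ((max 0 t) ^ m) *
        volume {x : Fin m → ℝ | (∀ k, 0 ≤ x k) ∧ ∑ k, x k ≤ 1} := by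
  rcases lt_trichotomy t 0 with h | h | h
  · have he : {x : Fin m → ℝ | (∀ k, 0 ≤ x k) ∧ ∑ k, x k ≤ t} = ∅ := by
      ext x
      simp only [Set.mem_setOf_eq, Set.mem_empty_iff_false, iff_false, not_and]
      intro hx hs
      have : (0:ℝ) ≤ ∑ k, x k := Finset.sum_nonneg fun k _ => hx k
      linarith
    rw [he, max_eq_left h.le, zero_pow (by omega), ENNReal.ofReal_zero, zero_mul,
      measure_empty]
  · subst h
    have he : {x : Fin m → ℝ | (∀ k, 0 ≤ x k) ∧ ∑ k, x k ≤ 0} ⊆ {x : Fin m → ℝ | x ⟨0, hm⟩ = 0} := by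
      intro x hx
      have := (Finset.sum_eq_zero_iff_of_nonneg (fun k _ => hx.1 k)).1
        (le_antisymm hx.2 (Finset.sum_nonneg fun k _ => hx.1 k))
      exact this ⟨0, hm⟩ (Finset.mem_univ _)
    have h0 : volume {x : Fin m → ℝ | x ⟨0, hm⟩ = 0} = 0 := by
      rw [volume_pi]
      exact Measure.pi_hyperplane _ _ _
    rw [measure_mono_null he h0, max_self, zero_pow (by omega), ENNReal.ofReal_zero, zero_mul]
  · have hset : {x : Fin m → ℝ | (∀ k, 0 ≤ x k) ∧ ∑ k, x k ≤ t}
        = t • {x : Fin m → ℝ | (∀ k, 0 ≤ x k) ∧ ∑ k, x k ≤ 1} := by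
      ext x
      rw [Set.mem_smul_set_iff_inv_smul_mem₀ h.ne']
      simp only [Set.mem_setOf_eq, Pi.smul_apply, smul_eq_mul]
      rw [← Finset.mul_sum]
      constructor
      · rintro ⟨hx, hs⟩
        refine ⟨fun k => mul_nonneg (inv_pos.2 h).le (hx k), ?_⟩
        rw [inv_mul_le_iff₀ h, mul_one]
        exact hs
      · rintro ⟨hx, hs⟩
        refine ⟨fun k => ?_, ?_⟩
        · have := hx k
          nlinarith [inv_pos.2 h]
        · rw [inv_mul_le_iff₀ h, mul_one] at hs
          exact hs
    rw [hset, Measure.addHaar_smul, Module.finrank_fin_fun, abs_of_pos (pow_pos h m),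
      max_eq_right h.le]

lemma vol_simplex : ∀ m : ℕ, 1 ≤ m →
    volume {x : Fin m → ℝ | (∀ k, 0 ≤ x k) ∧ ∑ k, x k ≤ 1}
      = (Nat.factorial m : ℝ≥0∞)⁻¹ := by
  refine Nat.le_induction ?_ ?_
  · -- m = 1
    have hset : {x : Fin 1 → ℝ | (∀ k, 0 ≤ x k) ∧ ∑ k, x k ≤ 1}
        = (MeasurableEquiv.funUnique (Fin 1) ℝ) ⁻¹' (Set.Icc 0 1) := by
      ext x
      simp [MeasurableEquiv.funUnique, Fin.forall_fin_one, Set.mem_Icc, Equiv.funUnique]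
    erw [hset, (volume_preserving_funUnique (Fin 1) ℝ).measure_preimage
        measurableSet_Icc.nullMeasurableSet, Real.volume_Icc]
    norm_num
  · intro m hm IH
    set c : ℝ≥0∞ := (Nat.factorial m : ℝ≥0∞)⁻¹ with hc
    set e := MeasurableEquiv.piFinSuccAbove (fun _ : Fin (m + 1) => ℝ) 0 with he
    set T : Set (ℝ × (Fin m → ℝ)) :=
      {p : ℝ × (Fin m → ℝ) | 0 ≤ p.1 ∧ (∀ k, 0 ≤ p.2 k) ∧ p.1 + ∑ k, p.2 k ≤ 1} with hT
    have hTm : MeasurableSet T := by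
      have h1 : MeasurableSet {p : ℝ × (Fin m → ℝ) | 0 ≤ p.1} :=
        measurableSet_le measurable_const measurable_fst
      have h2 : MeasurableSet {p : ℝ × (Fin m → ℝ) | ∀ k, 0 ≤ p.2 k} := by
        rw [Set.setOf_forall]
        exact MeasurableSet.iInter fun k =>
          measurableSet_le measurable_const (measurable_snd.eval)
      have h3 : MeasurableSet {p : ℝ × (Fin m → ℝ) | p.1 + ∑ k, p.2 k ≤ 1} :=
        measurableSet_le (measurable_fst.add
          (Finset.measurable_sum _ fun k _ => (measurable_pi_apply k).comp measurable_snd))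
          measurable_const
      exact h1.inter (h2.inter h3)
    have hset : {x : Fin (m + 1) → ℝ | (∀ k, 0 ≤ x k) ∧ ∑ k, x k ≤ 1} = e ⁻¹' T := by
      ext x
      have hex : e x = (x 0, fun j => x (Fin.succAbove 0 j)) := rfl
      simp only [Set.mem_preimage, hex, hT, Set.mem_setOf_eq, Fin.succAbove_zero,
        Fin.forall_fin_succ, Fin.sum_univ_succ]
      tauto
    rw [hset, (volume_preserving_piFinSuccAbove (fun _ : Fin (m + 1) => ℝ) 0).measure_preimage
        hTm.nullMeasurableSet]
    rw [show (volume : Measure (ℝ × (Fin m → ℝ))) = (volume : Measure ℝ).prod volume from rfl]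
    rw [Measure.prod_apply hTm]
    have hslice : ∀ t : ℝ, volume (Prod.mk t ⁻¹' T)
        = Set.indicator (Set.Icc (0:ℝ) 1) (fun t => ENNReal.ofReal ((1 - t) ^ m) * c) t := by
      intro t
      by_cases h0 : 0 ≤ t
      · have hpre : Prod.mk t ⁻¹' T = {y : Fin m → ℝ | (∀ k, 0 ≤ y k) ∧ ∑ k, y k ≤ 1 - t} := by
          ext y
          simp only [Set.mem_preimage, hT, Set.mem_setOf_eq]
          constructor
          · rintro ⟨-, h2, h3⟩; exact ⟨h2, by linarith⟩
          · rintro ⟨h2, h3⟩; exact ⟨h0, h2, by linarith⟩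
        rw [hpre, vol_smul m hm (1 - t), IH]
        by_cases h1 : t ≤ 1
        · rw [Set.indicator_of_mem (Set.mem_Icc.2 ⟨h0, h1⟩), max_eq_right (by linarith)]
        · rw [Set.indicator_of_notMem (by simp [Set.mem_Icc]; intro; linarith),
            max_eq_left (by linarith), zero_pow (by omega), ENNReal.ofReal_zero, zero_mul]
      · have hpre : Prod.mk t ⁻¹' T = ∅ := by
          ext y
          simp only [Set.mem_preimage, hT, Set.mem_setOf_eq, Set.mem_empty_iff_false, iff_false]
          rintro ⟨h1, -⟩; exact h0 h1
        rw [hpre, measure_empty, Set.indicator_of_notMem (by simp [Set.mem_Icc]; intro; linarith)]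
    rw [lintegral_congr hslice, lintegral_indicator measurableSet_Icc _]
    rw [lintegral_mul_const _ (by
      exact (measurable_const.sub measurable_id).pow_const m |>.ennreal_ofReal)]
    have hint : ∫⁻ t in Set.Icc (0:ℝ) 1, ENNReal.ofReal ((1 - t) ^ m)
        = ENNReal.ofReal (1 / (m + 1)) := by
      have hcont : Continuous fun t : ℝ => (1 - t) ^ m :=
        (continuous_const.sub continuous_id).pow m
      have hInt : IntegrableOn (fun t : ℝ => (1 - t) ^ m) (Set.Icc 0 1) :=
        hcont.integrableOn_Icc
      rw [← MeasureTheory.ofReal_integral_eq_lintegral_ofReal hInt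
        ((ae_restrict_iff' measurableSet_Icc).2 (Filter.Eventually.of_forall
          fun t ht => pow_nonneg (by linarith [ht.2]) m))]
      congr 1
      rw [MeasureTheory.integral_Icc_eq_integral_Ioc,
        ← intervalIntegral.integral_of_le (zero_le_one)]
      have := intervalIntegral.integral_comp_sub_left (a := (0:ℝ)) (b := 1)
        (fun x : ℝ => x ^ m) 1
      simp only [sub_zero, sub_self] at this
      rw [this, integral_pow]
      norm_num
    rw [hint, hc]
    rw [Nat.factorial_succ, Nat.cast_mul, ENNReal.mul_inv (by
        exact Or.inl (Nat.cast_ne_zero.2 (Nat.succ_ne_zero m)))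
      (Or.inl (ENNReal.natCast_ne_top _))]
    congr 1
    rw [one_div, ENNReal.ofReal_inv_of_pos (by positivity)]
    congr 1
    rw [← ENNReal.ofReal_natCast (m + 1)]
    congr 1
    push_cast
    ring

lemma vol_shift (m : ℕ) (v : Fin m → ℝ) (t : ℝ) :
    volume {x : Fin m → ℝ | (∀ k, v k ≤ x k) ∧ ∑ k, x k ≤ t}
      = volume {x : Fin m → ℝ | (∀ k, 0 ≤ x k) ∧ ∑ k, x k ≤ t - ∑ k, v k} := by
  have hs : {x : Fin m → ℝ | (∀ k, v k ≤ x k) ∧ ∑ k, x k ≤ t}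
      = (fun x => -v + x) ⁻¹' {x : Fin m → ℝ | (∀ k, 0 ≤ x k) ∧ ∑ k, x k ≤ t - ∑ k, v k} := by
    ext x
    simp only [Set.mem_preimage, Set.mem_setOf_eq, Pi.add_apply, Pi.neg_apply]
    rw [Finset.sum_add_distrib, Finset.sum_neg_distrib]
    constructor
    · rintro ⟨h1, h2⟩
      exact ⟨fun k => by linarith [h1 k], by linarith⟩
    · rintro ⟨h1, h2⟩
      exact ⟨fun k => by linarith [h1 k], by linarith⟩
  rw [hs, measure_preimage_add]

lemma main_aux (m : ℕ) (hm1 : 1 ≤ m) (i j : Fin m) (hij : i ≠ j)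
    (p : ℝ) (hp : 0 < p) (hp1 : p < 1) :
    ((Nat.factorial m : ℝ≥0∞) * volume
        {x : Fin m → ℝ | (∀ k, 0 ≤ x k) ∧ ∑ k, x k ≤ 1 ∧
          1 - (1 - x i) ^ m < p ∧ 1 - (1 - x j) ^ m < p}).toReal
      = 2 * p - 1 + (max 0 (2 * (1 - p) ^ ((m : ℝ)⁻¹) - 1)) ^ m := by
  have hm0 : m ≠ 0 := by omega
  have h1p : (0:ℝ) < 1 - p := by linarith
  set r := (1 - p) ^ ((m : ℝ)⁻¹) with hrdef
  have hr0 : 0 < r := Real.rpow_pos_of_pos h1p _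
  have hr1 : r < 1 := Real.rpow_lt_one h1p.le (by linarith) (by positivity)
  set q := 1 - r with hqdef
  have hq0 : 0 < q := by simp only [hqdef]; linarith
  have hrm : r ^ m = 1 - p := Real.rpow_inv_natCast_pow h1p.le hm0
  set M := max 0 (2 * r - 1) with hMdef
  have hM0 : 0 ≤ M := le_max_left _ _
  have hji : j ≠ i := Ne.symm hij
  have key : ∀ a : ℝ, 0 ≤ a → a ≤ 1 → (1 - (1 - a) ^ m < p ↔ a < q) := by
    intro a ha0 ha1
    have h1a : (0:ℝ) ≤ 1 - a := by linarith
    have h : (1 - (1 - a) ^ m < p) ↔ (1 - p < (1 - a) ^ m) := by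
      constructor <;> intro <;> linarith
    rw [h, ← hrm, pow_lt_pow_iff_left₀ hr0.le h1a hm0]
    constructor <;> intro <;> simp only [hqdef] at * <;> linarith
  set A : Set (Fin m → ℝ) := {x | (∀ k, 0 ≤ x k) ∧ ∑ k, x k ≤ 1} with hA
  set Bi : Set (Fin m → ℝ) := A ∩ {x | q ≤ x i} with hBi
  set Bj : Set (Fin m → ℝ) := A ∩ {x | q ≤ x j} with hBj
  set S : Set (Fin m → ℝ) := A ∩ ({x | x i < q} ∩ {x | x j < q}) with hS
  have hxle : ∀ x : Fin m → ℝ, (∀ k, 0 ≤ x k) → ∑ k, x k ≤ 1 → ∀ l, x l ≤ 1 :=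
    fun x hx hsum l =>
      le_trans (Finset.single_le_sum (fun k _ => hx k) (Finset.mem_univ l)) hsum
  have hSeq : {x : Fin m → ℝ | (∀ k, 0 ≤ x k) ∧ ∑ k, x k ≤ 1 ∧
      1 - (1 - x i) ^ m < p ∧ 1 - (1 - x j) ^ m < p} = S := by
    ext x
    simp only [Set.mem_setOf_eq, hS, hA, Set.mem_inter_iff]
    constructor
    · rintro ⟨hx, hsum, hi', hj'⟩
      exact ⟨⟨hx, hsum⟩, (key _ (hx i) (hxle x hx hsum i)).1 hi',
        (key _ (hx j) (hxle x hx hsum j)).1 hj'⟩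
    · rintro ⟨⟨hx, hsum⟩, hi', hj'⟩
      exact ⟨hx, hsum, (key _ (hx i) (hxle x hx hsum i)).2 hi',
        (key _ (hx j) (hxle x hx hsum j)).2 hj'⟩
  set c : ℝ≥0∞ := (Nat.factorial m : ℝ≥0∞)⁻¹ with hc
  have hvolA : volume A = c := vol_simplex m hm1
  have hvol : ∀ v : Fin m → ℝ,
      volume {x : Fin m → ℝ | (∀ k, v k ≤ x k) ∧ ∑ k, x k ≤ 1}
        = ENNReal.ofReal ((max 0 (1 - ∑ k, v k)) ^ m) * c := by
    intro v
    rw [vol_shift, vol_smul m hm1, vol_simplex m hm1]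
  have hvolBi : volume Bi = ENNReal.ofReal (1 - p) * c := by
    have hset : Bi = {x : Fin m → ℝ | (∀ k, (fun k => if k = i then q else 0) k ≤ x k)
        ∧ ∑ k, x k ≤ 1} := by
      ext x
      simp only [hBi, hA, Set.mem_inter_iff, Set.mem_setOf_eq]
      constructor
      · rintro ⟨⟨hx, hsum⟩, hi'⟩
        refine ⟨fun k => ?_, hsum⟩
        by_cases hk : k = i
        · rw [hk, if_pos rfl]; exact hi'
        · rw [if_neg hk]; exact hx k
      · rintro ⟨hv, hsum⟩
        refine ⟨⟨fun k => le_trans ?_ (hv k), hsum⟩, by simpa using hv i⟩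
        by_cases hk : k = i
        · rw [if_pos hk]; exact hq0.le
        · rw [if_neg hk]
    rw [hset, hvol]
    congr 2
    have hsum : ∑ k : Fin m, (if k = i then q else 0) = q := by simp
    rw [hsum, show (1:ℝ) - q = r from by simp [hqdef], max_eq_right hr0.le, hrm]
  have hvolBj : volume Bj = ENNReal.ofReal (1 - p) * c := by
    have hset : Bj = {x : Fin m → ℝ | (∀ k, (fun k => if k = j then q else 0) k ≤ x k)
        ∧ ∑ k, x k ≤ 1} := by
      ext x
      simp only [hBj, hA, Set.mem_inter_iff, Set.mem_setOf_eq]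
      constructor
      · rintro ⟨⟨hx, hsum⟩, hj'⟩
        refine ⟨fun k => ?_, hsum⟩
        by_cases hk : k = j
        · rw [hk, if_pos rfl]; exact hj'
        · rw [if_neg hk]; exact hx k
      · rintro ⟨hv, hsum⟩
        refine ⟨⟨fun k => le_trans ?_ (hv k), hsum⟩, by simpa using hv j⟩
        by_cases hk : k = j
        · rw [if_pos hk]; exact hq0.le
        · rw [if_neg hk]
    rw [hset, hvol]
    congr 2
    have hsum : ∑ k : Fin m, (if k = j then q else 0) = q := by simp
    rw [hsum, show (1:ℝ) - q = r from by simp [hqdef], max_eq_right hr0.le, hrm]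
  have hvolBij : volume (Bi ∩ Bj) = ENNReal.ofReal (M ^ m) * c := by
    have hset : Bi ∩ Bj = {x : Fin m → ℝ |
        (∀ k, (fun k => (if k = i then q else 0) + (if k = j then q else 0)) k ≤ x k)
        ∧ ∑ k, x k ≤ 1} := by
      ext x
      simp only [hBi, hBj, hA, Set.mem_inter_iff, Set.mem_setOf_eq]
      constructor
      · rintro ⟨⟨⟨hx, hsum⟩, hi'⟩, ⟨-, hj'⟩⟩
        refine ⟨fun k => ?_, hsum⟩
        by_cases hki : k = i
        · rw [hki, if_pos rfl, if_neg hij, add_zero]; exact hi'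
        · by_cases hkj : k = j
          · rw [hkj, if_neg hji, if_pos rfl, zero_add]; exact hj'
          · rw [if_neg hki, if_neg hkj, add_zero]; exact hx k
      · rintro ⟨hv, hsum⟩
        have h0 : ∀ k, 0 ≤ x k := by
          intro k
          refine le_trans ?_ (hv k)
          by_cases hki : k = i
          · rw [hki, if_pos rfl, if_neg hij, add_zero]; exact hq0.le
          · by_cases hkj : k = j
            · rw [hkj, if_neg hji, if_pos rfl, zero_add]; exact hq0.le
            · rw [if_neg hki, if_neg hkj, add_zero]
        have hqi : q ≤ x i := by
          have := hv i
          rwa [if_pos rfl, if_neg hij, add_zero] at this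
        have hqj : q ≤ x j := by
          have := hv j
          rwa [if_neg hji, if_pos rfl, zero_add] at this
        exact ⟨⟨⟨h0, hsum⟩, hqi⟩, ⟨h0, hsum⟩, hqj⟩
    rw [hset, hvol]
    congr 2
    have hsum : ∑ k : Fin m, ((if k = i then q else 0) + (if k = j then q else 0)) = q + q := by
      rw [Finset.sum_add_distrib]; simp
    rw [hsum, show (1:ℝ) - (q + q) = 2 * r - 1 from by simp only [hqdef]; ring, hMdef]
  have hmA : MeasurableSet A := measSimplex m 1
  have hmBi : MeasurableSet Bi :=
    hmA.inter (measurableSet_le measurable_const (measurable_pi_apply i))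
  have hmBj : MeasurableSet Bj :=
    hmA.inter (measurableSet_le measurable_const (measurable_pi_apply j))
  have hunion : S ∪ (Bi ∪ Bj) = A := by
    apply Set.Subset.antisymm
    · intro x hx
      rcases hx with h | h | h
      · exact h.1
      · exact h.1
      · exact h.1
    · intro x hx
      by_cases hqi : q ≤ x i
      · exact Or.inr (Or.inl ⟨hx, hqi⟩)
      by_cases hqj : q ≤ x j
      · exact Or.inr (Or.inr ⟨hx, hqj⟩)
      · exact Or.inl ⟨hx, not_le.1 hqi, not_le.1 hqj⟩
  have hdisj : Disjoint S (Bi ∪ Bj) := by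
    rw [Set.disjoint_left]
    rintro x ⟨-, hxi, hxj⟩ (⟨-, h⟩ | ⟨-, h⟩) <;>
      simp only [Set.mem_setOf_eq] at hxi hxj h <;> linarith
  have h1 : volume S + volume (Bi ∪ Bj) = c := by
    rw [← measure_union hdisj (hmBi.union hmBj), hunion, hvolA]
  have h2 : volume (Bi ∪ Bj) + volume (Bi ∩ Bj) = volume Bi + volume Bj :=
    measure_union_add_inter Bi hmBj
  have hcne : c ≠ ⊤ := by
    simp only [hc]
    exact ENNReal.inv_ne_top.2 (Nat.cast_ne_zero.2 (Nat.factorial_ne_zero m))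
  have hSne : volume S ≠ ⊤ := ne_top_of_le_ne_top hcne (h1 ▸ le_self_add)
  have hUne : volume (Bi ∪ Bj) ≠ ⊤ := ne_top_of_le_ne_top hcne (h1 ▸ le_add_self)
  have hBine : volume Bi ≠ ⊤ := by
    rw [hvolBi]; exact ENNReal.mul_ne_top ENNReal.ofReal_ne_top hcne
  have hBjne : volume Bj ≠ ⊤ := by
    rw [hvolBj]; exact ENNReal.mul_ne_top ENNReal.ofReal_ne_top hcne
  have hIJne : volume (Bi ∩ Bj) ≠ ⊤ := by
    rw [hvolBij]; exact ENNReal.mul_ne_top ENNReal.ofReal_ne_top hcne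
  have e1 : (volume S).toReal + (volume (Bi ∪ Bj)).toReal = c.toReal := by
    rw [← ENNReal.toReal_add hSne hUne, h1]
  have e2 : (volume (Bi ∪ Bj)).toReal + M ^ m * c.toReal
      = (1 - p) * c.toReal + (1 - p) * c.toReal := by
    have h := congrArg ENNReal.toReal h2
    rw [ENNReal.toReal_add hUne hIJne, ENNReal.toReal_add hBine hBjne, hvolBi, hvolBj,
      hvolBij] at h
    simp only [ENNReal.toReal_mul, ENNReal.toReal_ofReal h1p.le,
      ENNReal.toReal_ofReal (pow_nonneg hM0 m)] at h
    exact h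
  have hs : (volume S).toReal = c.toReal * (2 * p - 1 + M ^ m) := by
    linear_combination e1 - e2
  have hcR : c.toReal = ((Nat.factorial m : ℝ))⁻¹ := by
    rw [hc, ENNReal.toReal_inv, ENNReal.toReal_natCast]
  rw [hSeq, ENNReal.toReal_mul, ENNReal.toReal_natCast, hs, hcR, ← mul_assoc,
    mul_inv_cancel₀ (Nat.cast_ne_zero.2 (Nat.factorial_ne_zero m)), one_mul]

/-- For the Dirichlet copula sample ũᵢ = 1 − (1−dᵢ)^{n−1} with d ~ Dir(1ₙ), the Bernoulli
variables b̃ᵢ = 1{ũᵢ < p} have common pairwise correlation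
ρ = (max(0, 2(1−p)^{1/(n−1)} − 1)^{n−1} − (1−p)²)/(p(1−p)). -/
theorem stmt_16 (n : ℕ) (hn : 3 ≤ n) (i j : Fin (n - 1)) (hij : i ≠ j)
    (p : ℝ) (hp : 0 < p) (hp1 : p < 1) :
    ((((Nat.factorial (n - 1) : ENNReal)) * MeasureTheory.volume
          {x : Fin (n - 1) → ℝ | (∀ k, 0 ≤ x k) ∧ ∑ k, x k ≤ 1 ∧
            1 - (1 - x i) ^ (n - 1) < p ∧ 1 - (1 - x j) ^ (n - 1) < p}).toReal - p ^ 2)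
        / (p * (1 - p))
      = ((max 0 (2 * (1 - p) ^ ((n - 1 : ℝ)⁻¹) - 1)) ^ (n - 1) - (1 - p) ^ 2)
          / (p * (1 - p)) := by
  have hcast : ((n : ℝ) - 1) = ((n - 1 : ℕ) : ℝ) := by
    rw [Nat.cast_sub (by omega : 1 ≤ n), Nat.cast_one]
  rw [hcast, main_aux (n - 1) (by omega) i j hij p hp hp1,
    show 2 * p - 1 + (max 0 (2 * (1 - p) ^ (((n - 1 : ℕ) : ℝ)⁻¹) - 1)) ^ (n - 1) - p ^ 2
      = (max 0 (2 * (1 - p) ^ (((n - 1 : ℕ) : ℝ)⁻¹) - 1)) ^ (n - 1) - (1 - p) ^ 2 from by ring]
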